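/- Let q = 2^h with h ≥ 1 and let i satisfy gcd(i, h) = 1. Then the set H = {(1, t, t^(2^i)) : t ∈ F_q} ∪ {(0,1,0), (0,0,1)} of q+2 points of PG(2,q) is a hyperoval, i.e., no three of its points are collinear. -/

import Mathlib

open scoped LinearAlgebra.Projectivization

/-- The point set of the translation hyperoval
`{(1, t, t^(2^i)) : t ∈ F} ∪ {(0,1,0), (0,0,1)}` in `PG(2, q)`. -/
def translationHyperoval (F : Type) [Field F] (i : ℕ) :
    Set (ℙ F (Fin 3 → F)) :=
  {P | (∃ t : F, P = Projectivization.mk F ![1, t, t ^ 2 ^ i]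
          (by intro h0; have := congrFun h0 0; simp at this)) ∨
       P = Projectivization.mk F ![0, 1, 0]
          (by intro h0; have := congrFun h0 1; simp at this) ∨
       P = Projectivization.mk F ![0, 0, 1]
          (by intro h0; have := congrFun h0 2; simp at this)}

section Helpers

variable {F : Type} [Field F]

private lemma pow_pow_add (u : F) (a b : ℕ) : u ^ 2 ^ (a + b) = (u ^ 2 ^ a) ^ 2 ^ b := by
  rw [pow_add, pow_mul]

private lemma pow_reduceX (u : F) (h : ℕ) (hu : u ^ 2 ^ h = u) (n m : ℕ) :
    u ^ 2 ^ (n + h * m) = u ^ 2 ^ n := by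
  induction m with
  | zero => simp
  | succ m ih =>
    have e : n + h * (m + 1) = (n + h * m) + h := by ring
    rw [e, pow_pow_add, ih, ← pow_pow_add, Nat.add_comm, pow_pow_add, hu]

private lemma pow_iterX (u : F) (i : ℕ) (hu : u ^ 2 ^ i = u) (k : ℕ) :
    u ^ 2 ^ (i * k) = u := by
  induction k with
  | zero => simp
  | succ k ih =>
    have e : i * (k + 1) = i * k + i := by ring
    rw [e, pow_pow_add, ih, hu]

private lemma fixed_eq_oneX [Fintype F] (h i : ℕ) (hh : 1 ≤ h) (hgcd : Nat.gcd i h = 1)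
    (hF : Fintype.card F = 2 ^ h) (u : F) (hu0 : u ≠ 0) (hu : u ^ 2 ^ i = u) : u = 1 := by
  have hq : u ^ (2 ^ h - 1) = 1 := by
    rw [← hF]; exact FiniteField.pow_card_sub_one_eq_one u hu0
  have huh : u ^ 2 ^ h = u := by
    have h1 : 2 ^ h - 1 + 1 = 2 ^ h := Nat.sub_add_cancel Nat.one_le_two_pow
    calc u ^ 2 ^ h = u ^ (2 ^ h - 1) * u := by rw [← pow_succ, h1]
    _ = u := by rw [hq, one_mul]
  rcases eq_or_lt_of_le hh with h1 | h2
  · rw [← h1] at hq; simpa using hq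
  · obtain ⟨k, -, hk⟩ := Nat.exists_mul_mod_eq_one_of_coprime hgcd h2
    have hdiv : i * k = 1 + h * (i * k / h) := by
      conv_lhs => rw [← Nat.div_add_mod (i * k) h]
      rw [hk]; ring
    have hik := pow_iterX u i hu k
    rw [hdiv, pow_reduceX u h huh 1] at hik
    have hsq : u ^ 2 = u := by simpa using hik
    have h2' : u * u = u * 1 := by rw [mul_one]; linear_combination hsq
    exact mul_left_cancel₀ hu0 h2'

private lemma char_twoX [Fintype F] (h : ℕ) (hF : Fintype.card F = 2 ^ h) : CharP F 2 := by
  obtain ⟨n, hp, hcard⟩ := FiniteField.card F (ringChar F)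
  have h2 : ringChar F = 2 := by
    have hdvd : ringChar F ∣ 2 ^ h := by
      rw [← hF, hcard]; exact dvd_pow_self _ n.pos.ne'
    exact (Nat.prime_dvd_prime_iff_eq hp Nat.prime_two).mp (hp.dvd_of_dvd_pow hdvd)
  exact h2 ▸ ringChar.charP F

private lemma pow_injX [Fintype F] (h i : ℕ) (hF : Fintype.card F = 2 ^ h)
    {a b : F} (hab : a ^ 2 ^ i = b ^ 2 ^ i) : a = b := by
  haveI := char_twoX (F := F) h hF
  haveI : Fact (Nat.Prime 2) := ⟨Nat.prime_two⟩
  apply (iterateFrobenius F 2 i).injective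
  rw [iterateFrobenius_def, iterateFrobenius_def]; exact hab

private lemma pow_subX [Fintype F] (h i : ℕ) (hF : Fintype.card F = 2 ^ h) (a b : F) :
    (a - b) ^ 2 ^ i = a ^ 2 ^ i - b ^ 2 ^ i := by
  haveI := char_twoX (F := F) h hF
  haveI : Fact (Nat.Prime 2) := ⟨Nat.prime_two⟩
  have := map_sub (iterateFrobenius F 2 i) a b
  simpa [iterateFrobenius_def] using this

private lemma mk_affine_eq {a b A B : F} (h1 : ![1,a,A] ≠ 0) (h2 : ![1,b,B] ≠ 0)
    (heq : Projectivization.mk F ![1,a,A] h1 = Projectivization.mk F ![1,b,B] h2) :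
    a = b ∧ A = B := by
  rw [Projectivization.mk_eq_mk_iff'] at heq
  obtain ⟨c, hc⟩ := heq
  have e0 := congrFun hc 0
  have e1 := congrFun hc 1
  have e2 := congrFun hc 2
  simp [Pi.smul_apply, smul_eq_mul] at e0 e1 e2
  subst e0; simp at e1 e2; exact ⟨e1.symm, e2.symm⟩

private lemma mk_affine_ne_Y {a A : F} (h1 : ![1,a,A] ≠ 0) (h2 : ![(0:F),1,0] ≠ 0) :
    Projectivization.mk F ![1,a,A] h1 ≠ Projectivization.mk F ![0,1,0] h2 := by
  rw [Ne, Projectivization.mk_eq_mk_iff']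
  rintro ⟨c, hc⟩
  have e0 := congrFun hc 0
  simp at e0

private lemma mk_affine_ne_Z {a A : F} (h1 : ![1,a,A] ≠ 0) (h2 : ![(0:F),0,1] ≠ 0) :
    Projectivization.mk F ![1,a,A] h1 ≠ Projectivization.mk F ![0,0,1] h2 := by
  rw [Ne, Projectivization.mk_eq_mk_iff']
  rintro ⟨c, hc⟩
  have e0 := congrFun hc 0
  simp at e0

private lemma mk_Y_ne_Z (h1 : ![(0:F),1,0] ≠ 0) (h2 : ![(0:F),0,1] ≠ 0) :
    Projectivization.mk F ![0,1,0] h1 ≠ Projectivization.mk F ![0,0,1] h2 := by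
  rw [Ne, Projectivization.mk_eq_mk_iff']
  rintro ⟨c, hc⟩
  have e1 := congrFun hc 1
  simp at e1

private lemma indep3 (v1 v2 v3 : Fin 3 → F) (h1 : v1 ≠ 0) (h2 : v2 ≠ 0) (h3 : v3 ≠ 0)
    (hd : (Matrix.of ![v1, v2, v3]).det ≠ 0) :
    Projectivization.Independent ![Projectivization.mk F v1 h1,
      Projectivization.mk F v2 h2, Projectivization.mk F v3 h3] := by
  have hli : LinearIndependent F ![v1, v2, v3] :=
    Matrix.linearIndependent_rows_iff_isUnit.mpr
      ((Matrix.isUnit_iff_isUnit_det _).mpr (isUnit_iff_ne_zero.mpr hd))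
  have key := Projectivization.Independent.mk (K := F) ![v1, v2, v3]
    (fun k => by fin_cases k <;> assumption) hli
  convert key using 1
  funext k
  fin_cases k <;> rfl

private lemma ratio_eq (i : ℕ) (x y : F) (hy : y ≠ 0)
    (hkey : x * y ^ 2 ^ i = y * x ^ 2 ^ i) :
    (x * y⁻¹) ^ 2 ^ i = x * y⁻¹ := by
  rw [mul_pow, inv_pow]
  field_simp
  linear_combination -hkey

private lemma det_affine [Fintype F] (h i : ℕ) (hh : 1 ≤ h) (hgcd : Nat.gcd i h = 1)
    (hF : Fintype.card F = 2 ^ h) (a b c : F) (hab : a ≠ b) (hac : a ≠ c) (hbc : b ≠ c) :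
    (Matrix.of ![![1,a,a^2^i],![1,b,b^2^i],![1,c,c^2^i]]).det ≠ 0 := by
  simp [Matrix.det_fin_three, Matrix.vecHead, Matrix.vecTail]
  intro hd
  have hkey : (a - b) * ((a - c) ^ 2 ^ i) = (a - c) * ((a - b) ^ 2 ^ i) := by
    rw [pow_subX h i hF, pow_subX h i hF]
    linear_combination hd
  have hx : a - b ≠ 0 := sub_ne_zero.mpr hab
  have hy : a - c ≠ 0 := sub_ne_zero.mpr hac
  have hu0 : (a - b) * (a - c)⁻¹ ≠ 0 := mul_ne_zero hx (inv_ne_zero hy)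
  have h1 := fixed_eq_oneX h i hh hgcd hF _ hu0 (ratio_eq i _ _ hy hkey)
  field_simp at h1
  exact hbc (sub_right_inj.mp h1)

end Helpers

/-- For `q = 2^h` and `gcd(i,h) = 1`, the set
`H = {(1, t, t^(2^i)) : t ∈ F_q} ∪ {(0,1,0), (0,0,1)}` of `q + 2` points of `PG(2,q)`
is a hyperoval: no three of its points are collinear. -/
theorem translationHyperoval_is_hyperoval (h i : ℕ) (hh : 1 ≤ h)
    (hgcd : Nat.gcd i h = 1)
    (F : Type) [Field F] [Fintype F] (hF : Fintype.card F = 2 ^ h) :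
    (translationHyperoval F i).ncard = 2 ^ h + 2 ∧
    ∀ P1 P2 P3 : ℙ F (Fin 3 → F),
      P1 ∈ translationHyperoval F i → P2 ∈ translationHyperoval F i →
      P3 ∈ translationHyperoval F i →
      P1 ≠ P2 → P1 ≠ P3 → P2 ≠ P3 →
      Projectivization.Independent ![P1, P2, P3] := by
  classical
  constructor
  · -- cardinality
    set g : F → ℙ F (Fin 3 → F) := fun t => Projectivization.mk F ![1, t, t ^ 2 ^ i]
        (by intro h0; have := congrFun h0 0; simp at this) with hg
    set Y : ℙ F (Fin 3 → F) := Projectivization.mk F ![0, 1, 0]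
        (by intro h0; have := congrFun h0 1; simp at this) with hY
    set Z : ℙ F (Fin 3 → F) := Projectivization.mk F ![0, 0, 1]
        (by intro h0; have := congrFun h0 2; simp at this) with hZ
    have hset : translationHyperoval F i = Set.range g ∪ {Y, Z} := by
      ext P
      simp only [translationHyperoval, Set.mem_setOf_eq, Set.mem_union, Set.mem_range,
        Set.mem_insert_iff, Set.mem_singleton_iff, g, Y, Z]
      constructor
      · rintro (⟨t, rfl⟩ | hP | hP)
        · exact Or.inl ⟨t, rfl⟩
        · exact Or.inr (Or.inl hP)
        · exact Or.inr (Or.inr hP)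
      · rintro (⟨t, rfl⟩ | hP | hP)
        · exact Or.inl ⟨t, rfl⟩
        · exact Or.inr (Or.inl hP)
        · exact Or.inr (Or.inr hP)
    have hinj : Function.Injective g := by
      intro s t hst
      exact (mk_affine_eq _ _ hst).1
    have hYZ : Y ≠ Z := mk_Y_ne_Z _ _
    have hdisj : Disjoint (Set.range g) {Y, Z} := by
      rw [Set.disjoint_left]
      rintro P ⟨t, rfl⟩ hmem
      simp only [Set.mem_insert_iff, Set.mem_singleton_iff] at hmem
      rcases hmem with h' | h'
      · exact mk_affine_ne_Y _ _ h'
      · exact mk_affine_ne_Z _ _ h'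
    rw [hset, Set.ncard_union_eq hdisj (Set.toFinite _) (Set.toFinite _)]
    rw [Set.ncard_pair hYZ]
    have hr : (Set.range g).ncard = 2 ^ h := by
      rw [← Nat.card_coe_set_eq, Nat.card_range_of_injective hinj,
        Nat.card_eq_fintype_card, hF]
    rw [hr]
  · -- no three collinear
    intro P1 P2 P3 h1 h2 h3 h12 h13 h23
    simp only [translationHyperoval, Set.mem_setOf_eq] at h1 h2 h3
    rcases h1 with ⟨a, rfl⟩ | rfl | rfl
    · rcases h2 with ⟨b, rfl⟩ | rfl | rfl
      · rcases h3 with ⟨c, rfl⟩ | rfl | rfl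
        · -- (a, b, c)
          have hab : a ≠ b := fun e => h12 (by rw [e])
          have hac : a ≠ c := fun e => h13 (by rw [e])
          have hbc : b ≠ c := fun e => h23 (by rw [e])
          exact indep3 _ _ _ _ _ _ (det_affine h i hh hgcd hF a b c hab hac hbc)
        · -- (a, b, Y)
          have hab : a ≠ b := fun e => h12 (by rw [e])
          have hAB : a ^ 2 ^ i ≠ b ^ 2 ^ i := fun e => hab (pow_injX h i hF e)
          apply indep3
          simp [Matrix.det_fin_three, Matrix.vecHead, Matrix.vecTail]
          intro hd
          first
          | exact hAB (by linear_combination hd)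
          | exact hAB (by linear_combination -hd)
        · -- (a, b, Z)
          have hab : a ≠ b := fun e => h12 (by rw [e])
          apply indep3
          simp [Matrix.det_fin_three, Matrix.vecHead, Matrix.vecTail]
          intro hd
          first
          | exact hab (by linear_combination hd)
          | exact hab (by linear_combination -hd)
      · rcases h3 with ⟨b, rfl⟩ | rfl | rfl
        · -- (a, Y, b)
          have hab : a ≠ b := fun e => h13 (by rw [e])
          have hAB : a ^ 2 ^ i ≠ b ^ 2 ^ i := fun e => hab (pow_injX h i hF e)
          apply indep3
          simp [Matrix.det_fin_three, Matrix.vecHead, Matrix.vecTail]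
          intro hd
          first
          | exact hAB (by linear_combination hd)
          | exact hAB (by linear_combination -hd)
        · exact absurd rfl h23
        · -- (a, Y, Z)
          apply indep3
          simp [Matrix.det_fin_three, Matrix.vecHead, Matrix.vecTail]
      · rcases h3 with ⟨b, rfl⟩ | rfl | rfl
        · -- (a, Z, b)
          have hab : a ≠ b := fun e => h13 (by rw [e])
          apply indep3
          simp [Matrix.det_fin_three, Matrix.vecHead, Matrix.vecTail]
          intro hd
          first
          | exact hab (by linear_combination hd)
          | exact hab (by linear_combination -hd)
        · -- (a, Z, Y)
          apply indep3
          simp [Matrix.det_fin_three, Matrix.vecHead, Matrix.vecTail]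
        · exact absurd rfl h23
    · rcases h2 with ⟨a, rfl⟩ | rfl | rfl
      · rcases h3 with ⟨b, rfl⟩ | rfl | rfl
        · -- (Y, a, b)
          have hab : a ≠ b := fun e => h23 (by rw [e])
          have hAB : a ^ 2 ^ i ≠ b ^ 2 ^ i := fun e => hab (pow_injX h i hF e)
          apply indep3
          simp [Matrix.det_fin_three, Matrix.vecHead, Matrix.vecTail]
          intro hd
          first
          | exact hAB (by linear_combination hd)
          | exact hAB (by linear_combination -hd)
        · exact absurd rfl h13
        · -- (Y, a, Z)
          apply indep3
          simp [Matrix.det_fin_three, Matrix.vecHead, Matrix.vecTail]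
      · exact absurd rfl h12
      · rcases h3 with ⟨a, rfl⟩ | rfl | rfl
        · -- (Y, Z, a)
          apply indep3
          simp [Matrix.det_fin_three, Matrix.vecHead, Matrix.vecTail]
        · exact absurd rfl h13
        · exact absurd rfl h23
    · rcases h2 with ⟨a, rfl⟩ | rfl | rfl
      · rcases h3 with ⟨b, rfl⟩ | rfl | rfl
        · -- (Z, a, b)
          have hab : a ≠ b := fun e => h23 (by rw [e])
          apply indep3
          simp [Matrix.det_fin_three, Matrix.vecHead, Matrix.vecTail]
          intro hd
          first
          | exact hab (by linear_combination hd)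
          | exact hab (by linear_combination -hd)
        · -- (Z, a, Y)
          apply indep3
          simp [Matrix.det_fin_three, Matrix.vecHead, Matrix.vecTail]
        · exact absurd rfl h13
      · rcases h3 with ⟨a, rfl⟩ | rfl | rfl
        · -- (Z, Y, a)
          apply indep3
          simp [Matrix.det_fin_three, Matrix.vecHead, Matrix.vecTail]
        · exact absurd rfl h23
        · exact absurd rfl h13
      · exact absurd rfl h12
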